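/- Let C(u,t) be a smooth family of immersed closed curves, E(t) := ∫ |D_s² C|² ds the elastic energy, L(t) the length, and N(t) := (∫ |D_s² ∂_t C|² ds)^{1/2}. Then |E'(t)| ≤ 2√(E(t)) N(t) + 3 E(t) √(L(t)) N(t). -/

import Mathlib

open Real
open scoped RealInnerProductSpace

/-- Partial derivative in the curve parameter `u`. -/
noncomputable def Du (n : ℕ) (G : ℝ → ℝ → EuclideanSpace ℝ (Fin n)) (u t : ℝ) :
    EuclideanSpace ℝ (Fin n) :=
  deriv (fun u' => G u' t) u

/-- Partial derivative in the time parameter `t`. -/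
noncomputable def Dt (n : ℕ) (G : ℝ → ℝ → EuclideanSpace ℝ (Fin n)) (u t : ℝ) :
    EuclideanSpace ℝ (Fin n) :=
  deriv (fun t' => G u t') t

/-- Arclength derivative `D_s = |∂ᵤC|⁻¹ ∂ᵤ` along the family of curves `C`. -/
noncomputable def Ds (n : ℕ) (C G : ℝ → ℝ → EuclideanSpace ℝ (Fin n)) (u t : ℝ) :
    EuclideanSpace ℝ (Fin n) :=
  ‖Du n C u t‖⁻¹ • Du n G u t

/-- Elastic energy `E(t) = ∫ |D_s² C|² ds`. -/
noncomputable def elasticE (n : ℕ) (C : ℝ → ℝ → EuclideanSpace ℝ (Fin n)) (t : ℝ) : ℝ :=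
  ∫ u in (0:ℝ)..(2 * π), ‖Ds n C (Ds n C C) u t‖ ^ 2 * ‖Du n C u t‖

/-- Length `L(t)` of the curve `C(·,t)`. -/
noncomputable def clen (n : ℕ) (C : ℝ → ℝ → EuclideanSpace ℝ (Fin n)) (t : ℝ) : ℝ :=
  ∫ u in (0:ℝ)..(2 * π), ‖Du n C u t‖

/-- `N(t) = (∫ |D_s² ∂ₜC|² ds)^{1/2}`. -/
noncomputable def NN (n : ℕ) (C : ℝ → ℝ → EuclideanSpace ℝ (Fin n)) (t : ℝ) : ℝ :=
  Real.sqrt (∫ u in (0:ℝ)..(2 * π), ‖Ds n C (Ds n C (Dt n C)) u t‖ ^ 2 * ‖Du n C u t‖)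

variable {n : ℕ}

abbrev Esp (n : ℕ) := EuclideanSpace ℝ (Fin n)

lemma hasDerivAt_Du {G : ℝ → ℝ → Esp n} (hG : ContDiff ℝ (⊤ : ℕ∞) fun p : ℝ × ℝ => G p.1 p.2)
    (u t : ℝ) : HasDerivAt (fun u' => G u' t) (Du n G u t) u := by
  have h : DifferentiableAt ℝ (fun u' => G u' t) u := by
    exact ((hG.differentiable (by simp)).comp
      (differentiable_id.prodMk (differentiable_const t))).differentiableAt
  exact h.hasDerivAt

lemma hasDerivAt_Dt {G : ℝ → ℝ → Esp n} (hG : ContDiff ℝ (⊤ : ℕ∞) fun p : ℝ × ℝ => G p.1 p.2)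
    (u t : ℝ) : HasDerivAt (fun t' => G u t') (Dt n G u t) t := by
  have h : DifferentiableAt ℝ (fun t' => G u t') t := by
    exact ((hG.differentiable (by simp)).comp
      ((differentiable_const u).prodMk differentiable_id)).differentiableAt
  exact h.hasDerivAt

lemma Du_eq_fderiv {G : ℝ → ℝ → Esp n} (hG : ContDiff ℝ (⊤ : ℕ∞) fun p : ℝ × ℝ => G p.1 p.2)
    (u t : ℝ) : Du n G u t = fderiv ℝ (fun p : ℝ × ℝ => G p.1 p.2) (u, t) ((1:ℝ), (0:ℝ)) := by
  have h1 : HasFDerivAt (fun p : ℝ × ℝ => G p.1 p.2)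
      (fderiv ℝ (fun p : ℝ × ℝ => G p.1 p.2) (u, t)) (u, t) :=
    ((hG.differentiable (by simp)) (u, t)).hasFDerivAt
  have h2 : HasDerivAt (fun u' : ℝ => (u', t)) ((1:ℝ), (0:ℝ)) u :=
    (hasDerivAt_id u).prodMk (hasDerivAt_const u t)
  have h3 := h1.comp_hasDerivAt u h2
  exact h3.deriv.symm ▸ rfl

lemma Dt_eq_fderiv {G : ℝ → ℝ → Esp n} (hG : ContDiff ℝ (⊤ : ℕ∞) fun p : ℝ × ℝ => G p.1 p.2)
    (u t : ℝ) : Dt n G u t = fderiv ℝ (fun p : ℝ × ℝ => G p.1 p.2) (u, t) ((0:ℝ), (1:ℝ)) := by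
  have h1 : HasFDerivAt (fun p : ℝ × ℝ => G p.1 p.2)
      (fderiv ℝ (fun p : ℝ × ℝ => G p.1 p.2) (u, t)) (u, t) :=
    ((hG.differentiable (by simp)) (u, t)).hasFDerivAt
  have h2 : HasDerivAt (fun t' : ℝ => (u, t')) ((0:ℝ), (1:ℝ)) t :=
    (hasDerivAt_const t u).prodMk (hasDerivAt_id t)
  have h3 := h1.comp_hasDerivAt t h2
  exact h3.deriv.symm ▸ rfl

lemma contDiff_Du {G : ℝ → ℝ → Esp n} (hG : ContDiff ℝ (⊤ : ℕ∞) fun p : ℝ × ℝ => G p.1 p.2) :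
    ContDiff ℝ (⊤ : ℕ∞) fun p : ℝ × ℝ => Du n G p.1 p.2 := by
  have : (fun p : ℝ × ℝ => Du n G p.1 p.2)
      = fun p : ℝ × ℝ => fderiv ℝ (fun q : ℝ × ℝ => G q.1 q.2) p ((1:ℝ), (0:ℝ)) := by
    funext p
    exact Du_eq_fderiv hG p.1 p.2
  rw [this]
  exact (hG.fderiv_right (mod_cast le_top)).clm_apply contDiff_const

lemma contDiff_Dt {G : ℝ → ℝ → Esp n} (hG : ContDiff ℝ (⊤ : ℕ∞) fun p : ℝ × ℝ => G p.1 p.2) :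
    ContDiff ℝ (⊤ : ℕ∞) fun p : ℝ × ℝ => Dt n G p.1 p.2 := by
  have : (fun p : ℝ × ℝ => Dt n G p.1 p.2)
      = fun p : ℝ × ℝ => fderiv ℝ (fun q : ℝ × ℝ => G q.1 q.2) p ((0:ℝ), (1:ℝ)) := by
    funext p
    exact Dt_eq_fderiv hG p.1 p.2
  rw [this]
  exact (hG.fderiv_right (mod_cast le_top)).clm_apply contDiff_const

/-- Clairaut's theorem for `Du`/`Dt`. -/
lemma Dt_Du_comm {G : ℝ → ℝ → Esp n} (hG : ContDiff ℝ (⊤ : ℕ∞) fun p : ℝ × ℝ => G p.1 p.2)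
    (u t : ℝ) : Dt n (Du n G) u t = Du n (Dt n G) u t := by
  set F := fun p : ℝ × ℝ => G p.1 p.2 with hF
  set H := fderiv ℝ F with hH
  have hHsm : ContDiff ℝ (⊤ : ℕ∞) H := hG.fderiv_right (mod_cast le_top)
  have hHdiff : Differentiable ℝ H := hHsm.differentiable (by simp)
  have symm : ∀ v w, fderiv ℝ H (u, t) v w = fderiv ℝ H (u, t) w v := by
    intro v w
    exact second_derivative_symmetric
      (fun y => ((hG.differentiable (by simp)) y).hasFDerivAt)
      (hHdiff (u, t)).hasFDerivAt v w
  have e1 : Dt n (Du n G) u t = fderiv ℝ H (u, t) ((0:ℝ), (1:ℝ)) ((1:ℝ), (0:ℝ)) := by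
    have h2 : HasDerivAt (fun t' : ℝ => (u, t')) ((0:ℝ), (1:ℝ)) t :=
      (hasDerivAt_const t u).prodMk (hasDerivAt_id t)
    have h1 : HasFDerivAt H (fderiv ℝ H (u, t)) (u, t) := (hHdiff (u, t)).hasFDerivAt
    have h3 : HasDerivAt (fun t' : ℝ => H (u, t')) (fderiv ℝ H (u, t) ((0:ℝ), (1:ℝ))) t :=
      h1.comp_hasDerivAt t h2
    have h4 : HasDerivAt (fun t' : ℝ => H (u, t') ((1:ℝ), (0:ℝ)))
        (fderiv ℝ H (u, t) ((0:ℝ), (1:ℝ)) ((1:ℝ), (0:ℝ))) t := by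
      have ev : (fun A : (ℝ × ℝ) →L[ℝ] Esp n => A ((1:ℝ), (0:ℝ))) =
          (ContinuousLinearMap.apply ℝ (Esp n) ((1:ℝ), (0:ℝ)) : ((ℝ × ℝ) →L[ℝ] Esp n) →L[ℝ] Esp n) := rfl
      have := (ContinuousLinearMap.apply ℝ (Esp n) ((1:ℝ), (0:ℝ))).hasFDerivAt.comp_hasDerivAt t h3
      exact this
    have : (fun t' : ℝ => Du n G u t') = fun t' : ℝ => H (u, t') ((1:ℝ), (0:ℝ)) := by
      funext t'
      exact Du_eq_fderiv hG u t'
    rw [Dt, this]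
    exact h4.deriv
  have e2 : Du n (Dt n G) u t = fderiv ℝ H (u, t) ((1:ℝ), (0:ℝ)) ((0:ℝ), (1:ℝ)) := by
    have h2 : HasDerivAt (fun u' : ℝ => (u', t)) ((1:ℝ), (0:ℝ)) u :=
      (hasDerivAt_id u).prodMk (hasDerivAt_const u t)
    have h1 : HasFDerivAt H (fderiv ℝ H (u, t)) (u, t) := (hHdiff (u, t)).hasFDerivAt
    have h3 : HasDerivAt (fun u' : ℝ => H (u', t)) (fderiv ℝ H (u, t) ((1:ℝ), (0:ℝ))) u :=
      h1.comp_hasDerivAt u h2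
    have h4 : HasDerivAt (fun u' : ℝ => H (u', t) ((0:ℝ), (1:ℝ)))
        (fderiv ℝ H (u, t) ((1:ℝ), (0:ℝ)) ((0:ℝ), (1:ℝ))) u := by
      have := (ContinuousLinearMap.apply ℝ (Esp n) ((0:ℝ), (1:ℝ))).hasFDerivAt.comp_hasDerivAt u h3
      exact this
    have : (fun u' : ℝ => Dt n G u' t) = fun u' : ℝ => H (u', t) ((0:ℝ), (1:ℝ)) := by
      funext u'
      exact Dt_eq_fderiv hG u' t
    rw [Du, this]
    exact h4.deriv
  rw [e1, e2, symm]

lemma HasDerivAt.norm' {F : ℝ → Esp n} {F' : Esp n} {x : ℝ} (hf : HasDerivAt F F' x)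
    (h0 : F x ≠ 0) : HasDerivAt (fun y => ‖F y‖) (⟪F x, F'⟫ / ‖F x‖) x := by
  have h1 : HasDerivAt (fun y => ‖F y‖ ^ 2) (2 * ⟪F x, F'⟫) x := hf.norm_sq
  have h2 : (fun y => ‖F y‖ ^ 2) x ≠ 0 := pow_ne_zero 2 (norm_ne_zero_iff.2 h0)
  have h3 := h1.sqrt h2
  have h4 : (fun y => Real.sqrt (‖F y‖ ^ 2)) = fun y => ‖F y‖ := by
    funext y
    exact Real.sqrt_sq (norm_nonneg _)
  rw [h4] at h3
  convert h3 using 1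
  rw [Real.sqrt_sq (norm_nonneg _)]
  field_simp

section Curve

variable {C : ℝ → ℝ → Esp n}
  (hC : ContDiff ℝ (⊤ : ℕ∞) fun p : ℝ × ℝ => C p.1 p.2)
  (himm : ∀ u t, Du n C u t ≠ 0)

include hC himm

lemma contDiff_normDu : ContDiff ℝ (⊤ : ℕ∞) fun p : ℝ × ℝ => ‖Du n C p.1 p.2‖ :=
  (contDiff_Du hC).norm ℝ fun p => himm p.1 p.2

lemma contDiff_invNormDu : ContDiff ℝ (⊤ : ℕ∞) fun p : ℝ × ℝ => ‖Du n C p.1 p.2‖⁻¹ :=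
  (contDiff_normDu hC himm).inv fun p => norm_ne_zero_iff.2 (himm p.1 p.2)

lemma contDiff_Ds {G : ℝ → ℝ → Esp n} (hG : ContDiff ℝ (⊤ : ℕ∞) fun p : ℝ × ℝ => G p.1 p.2) :
    ContDiff ℝ (⊤ : ℕ∞) fun p : ℝ × ℝ => Ds n C G p.1 p.2 :=
  (contDiff_invNormDu hC himm).smul (contDiff_Du hG)


set_option linter.unusedSectionVars false

variable (u t : ℝ)

lemma hasDerivAt_Vt : HasDerivAt (fun t' => Du n C u t') (Du n (Dt n C) u t) t := by
  have h := hasDerivAt_Dt (contDiff_Du hC) u t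
  rwa [Dt_Du_comm hC] at h

lemma DuDt_eq : Du n (Dt n C) u t = ‖Du n C u t‖ • Ds n C (Dt n C) u t := by
  rw [Ds, smul_smul, mul_inv_cancel₀ (norm_ne_zero_iff.2 (himm u t)), one_smul]

lemma hasDerivAt_v :
    HasDerivAt (fun t' => ‖Du n C u t'‖)
      (⟪Ds n C (Dt n C) u t, Ds n C C u t⟫ * ‖Du n C u t‖) t := by
  have h := (hasDerivAt_Vt hC himm u t).norm' (himm u t)
  convert h using 1
  rw [Ds, Ds, real_inner_smul_left, real_inner_smul_right, real_inner_comm]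
  have hv : ‖Du n C u t‖ ≠ 0 := norm_ne_zero_iff.2 (himm u t)
  field_simp

lemma norm_T_one : ‖Ds n C C u t‖ = 1 := by
  rw [Ds, norm_smul, norm_inv, norm_norm,
    inv_mul_cancel₀ (norm_ne_zero_iff.2 (himm u t))]

lemma hasDerivAt_T :
    HasDerivAt (fun t' => Ds n C C u t')
      (Ds n C (Dt n C) u t -
        ⟪Ds n C (Dt n C) u t, Ds n C C u t⟫ • Ds n C C u t) t := by
  have hv : ‖Du n C u t‖ ≠ 0 := norm_ne_zero_iff.2 (himm u t)
  have hinv := (hasDerivAt_v hC himm u t).inv hv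
  have h : HasDerivAt (fun t' => Ds n C C u t') _ t := hinv.smul (hasDerivAt_Vt hC himm u t)
  have he : (fun t' => ‖Du n C u t'‖⁻¹ • Du n C u t') = fun t' => Ds n C C u t' := rfl
  simp only [Pi.inv_apply] at h
  convert h using 1
  rw [DuDt_eq hC himm u t, Ds, Ds]
  set v := ‖Du n C u t‖
  set F := Du n (Dt n C) u t
  set V := Du n C u t
  have : ⟪v⁻¹ • F, v⁻¹ • V⟫ = v⁻¹ * (v⁻¹ * ⟪F, V⟫) := by
    rw [real_inner_smul_left, real_inner_smul_right]
  rw [this]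
  rw [smul_smul, smul_smul, smul_smul]
  rw [sub_eq_add_neg]
  congr 1
  · congr 1
    field_simp
  · rw [← neg_smul]
    congr 1
    field_simp

lemma inner_DuT_T : ⟪Du n (Ds n C C) u t, Ds n C C u t⟫ = 0 := by
  have hT : ContDiff ℝ (⊤ : ℕ∞) fun p : ℝ × ℝ => Ds n C C p.1 p.2 := contDiff_Ds hC himm hC
  have h1 : HasDerivAt (fun u' => Ds n C C u' t) (Du n (Ds n C C) u t) u :=
    hasDerivAt_Du hT u t
  have h2 : HasDerivAt (fun u' => ⟪Ds n C C u' t, Ds n C C u' t⟫)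
      (⟪Ds n C C u t, Du n (Ds n C C) u t⟫ + ⟪Du n (Ds n C C) u t, Ds n C C u t⟫) u :=
    h1.inner ℝ h1
  have h3 : (fun u' => ⟪Ds n C C u' t, Ds n C C u' t⟫) = fun _ : ℝ => (1 : ℝ) := by
    funext u'
    rw [real_inner_self_eq_norm_sq, norm_T_one hC himm u' t, one_pow]
  rw [h3] at h2
  have h4 : (⟪Ds n C C u t, Du n (Ds n C C) u t⟫ + ⟪Du n (Ds n C C) u t, Ds n C C u t⟫) = 0 :=
    h2.unique (hasDerivAt_const u (1 : ℝ))
  rw [real_inner_comm] at h4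
  linarith [h4]

lemma inner_kappa_T : ⟪Ds n C (Ds n C C) u t, Ds n C C u t⟫ = 0 := by
  rw [Ds, real_inner_smul_left, inner_DuT_T hC himm u t, mul_zero]

lemma Dt_T_eq (u' t'' : ℝ) : Dt n (Ds n C C) u' t'' =
    Ds n C (Dt n C) u' t'' - ⟪Ds n C (Dt n C) u' t'', Ds n C C u' t''⟫ • Ds n C C u' t'' :=
  (hasDerivAt_T hC himm u' t'').deriv

lemma hasDerivAt_kappa : ∃ c : ℝ,
    HasDerivAt (fun t' => Ds n C (Ds n C C) u t')
      (Ds n C (Ds n C (Dt n C)) u t - c • Ds n C C u t -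
        (2 * ⟪Ds n C (Dt n C) u t, Ds n C C u t⟫) • Ds n C (Ds n C C) u t) t := by
  have hv : ‖Du n C u t‖ ≠ 0 := norm_ne_zero_iff.2 (himm u t)
  have hT : ContDiff ℝ (⊤ : ℕ∞) fun p : ℝ × ℝ => Ds n C C p.1 p.2 := contDiff_Ds hC himm hC
  have hf : ContDiff ℝ (⊤ : ℕ∞) fun p : ℝ × ℝ => Ds n C (Dt n C) p.1 p.2 :=
    contDiff_Ds hC himm (contDiff_Dt hC)
  -- derivative of u' ↦ φ(u')
  set d : ℝ := ⟪Ds n C (Dt n C) u t, Du n (Ds n C C) u t⟫ +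
      ⟪Du n (Ds n C (Dt n C)) u t, Ds n C C u t⟫ with hd
  have hphi : HasDerivAt (fun u' => ⟪Ds n C (Dt n C) u' t, Ds n C C u' t⟫) d u :=
    (hasDerivAt_Du hf u t).inner ℝ (hasDerivAt_Du hT u t)
  -- derivative of u' ↦ Dt T u' t
  set φ : ℝ := ⟪Ds n C (Dt n C) u t, Ds n C C u t⟫ with hφ
  have H : HasDerivAt (fun u' => Ds n C (Dt n C) u' t -
      ⟪Ds n C (Dt n C) u' t, Ds n C C u' t⟫ • Ds n C C u' t)
      (Du n (Ds n C (Dt n C)) u t -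
        (φ • Du n (Ds n C C) u t + d • Ds n C C u t)) u :=
    (hasDerivAt_Du hf u t).sub (hphi.smul (hasDerivAt_Du hT u t))
  have hDuDtT : Du n (Dt n (Ds n C C)) u t =
      Du n (Ds n C (Dt n C)) u t - (φ • Du n (Ds n C C) u t + d • Ds n C C u t) := by
    have he : (fun u' => Dt n (Ds n C C) u' t) = fun u' => Ds n C (Dt n C) u' t -
        ⟪Ds n C (Dt n C) u' t, Ds n C C u' t⟫ • Ds n C C u' t := by
      funext u'
      exact Dt_T_eq hC himm u' t
    rw [Du, he]
    exact H.deriv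
  -- t-derivative of u' fixed Du T
  have hDuT : HasDerivAt (fun t' => Du n (Ds n C C) u t') (Du n (Dt n (Ds n C C)) u t) t := by
    have h := hasDerivAt_Dt (contDiff_Du hT) u t
    rwa [Dt_Du_comm hT] at h
  rw [hDuDtT] at hDuT
  have hinv := (hasDerivAt_v hC himm u t).inv hv
  have hk : HasDerivAt (fun t' => Ds n C (Ds n C C) u t') _ t := hinv.smul hDuT
  refine ⟨‖Du n C u t‖⁻¹ * d, ?_⟩
  have he2 : (fun t' => ‖Du n C u t'‖⁻¹ • Du n (Ds n C C) u t') =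
      fun t' => Ds n C (Ds n C C) u t' := rfl
  simp only [Pi.inv_apply] at hk
  set v := ‖Du n C u t‖
  set A := Du n (Ds n C (Dt n C)) u t
  set B := Du n (Ds n C C) u t
  set Tv := Ds n C C u t
  convert hk using 1
  simp only [show Ds n C (Ds n C (Dt n C)) u t = v⁻¹ • A from rfl,
    show Ds n C (Ds n C C) u t = v⁻¹ • B from rfl]
  simp only [← hφ]
  match_scalars <;> field_simp <;> ring

lemma hasDerivAt_integrand :
    HasDerivAt (fun t' => ‖Ds n C (Ds n C C) u t'‖ ^ 2 * ‖Du n C u t'‖)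
      (2 * ⟪Ds n C (Ds n C C) u t, Ds n C (Ds n C (Dt n C)) u t⟫ * ‖Du n C u t‖ -
        3 * ⟪Ds n C (Dt n C) u t, Ds n C C u t⟫ *
          (‖Ds n C (Ds n C C) u t‖ ^ 2 * ‖Du n C u t‖)) t := by
  obtain ⟨c, hk⟩ := hasDerivAt_kappa hC himm u t
  have h : HasDerivAt (fun t' => ‖Ds n C (Ds n C C) u t'‖ ^ 2 * ‖Du n C u t'‖) _ t :=
    hk.norm_sq.mul (hasDerivAt_v hC himm u t)
  convert h using 1
  rw [inner_sub_right, inner_sub_right, real_inner_smul_right, real_inner_smul_right,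
    inner_kappa_T hC himm u t, real_inner_self_eq_norm_sq]
  ring

lemma Du_smul_Ds (G : ℝ → ℝ → Esp n) (u t : ℝ) :
    Du n G u t = ‖Du n C u t‖ • Ds n C G u t := by
  rw [Ds, smul_smul, mul_inv_cancel₀ (norm_ne_zero_iff.2 (himm u t)), one_smul]

end Curve

lemma integral_cs {f g : ℝ → ℝ} (hf : Continuous f) (hg : Continuous g) :
    ∫ u in (0:ℝ)..(2 * π), f u * g u ≤
      Real.sqrt (∫ u in (0:ℝ)..(2 * π), f u ^ 2) *
        Real.sqrt (∫ u in (0:ℝ)..(2 * π), g u ^ 2) := by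
  have h2π : (0:ℝ) ≤ 2 * π := by positivity
  set A := ∫ u in (0:ℝ)..(2 * π), f u ^ 2 with hA
  set B := ∫ u in (0:ℝ)..(2 * π), f u * g u with hB
  set Cc := ∫ u in (0:ℝ)..(2 * π), g u ^ 2 with hCc
  have hAnn : 0 ≤ A := intervalIntegral.integral_nonneg h2π fun u _ => sq_nonneg _
  have hCnn : 0 ≤ Cc := intervalIntegral.integral_nonneg h2π fun u _ => sq_nonneg _
  have key : ∀ lam : ℝ, 0 ≤ Cc * (lam * lam) + (2 * B) * lam + A := by
    intro lam
    have h0 : 0 ≤ ∫ u in (0:ℝ)..(2 * π), (f u + lam * g u) ^ 2 :=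
      intervalIntegral.integral_nonneg h2π fun u _ => sq_nonneg _
    have hexp : (∫ u in (0:ℝ)..(2 * π), (f u + lam * g u) ^ 2)
        = A + (2 * B) * lam + Cc * (lam * lam) := by
      have e : ∀ u, (f u + lam * g u) ^ 2
          = f u ^ 2 + (2 * lam) * (f u * g u) + (lam * lam) * g u ^ 2 := by
        intro u; ring
      rw [intervalIntegral.integral_congr (g := fun u =>
        f u ^ 2 + (2 * lam) * (f u * g u) + (lam * lam) * g u ^ 2) (fun u _ => e u)]
      rw [intervalIntegral.integral_add, intervalIntegral.integral_add,
        intervalIntegral.integral_const_mul, intervalIntegral.integral_const_mul]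
      · ring
      · exact (hf.pow 2).intervalIntegrable _ _
      · exact (continuous_const.mul (hf.mul hg)).intervalIntegrable _ _
      · exact ((hf.pow 2).add (continuous_const.mul (hf.mul hg))).intervalIntegrable _ _
      · exact (continuous_const.mul (hg.pow 2)).intervalIntegrable _ _
    nlinarith [h0, hexp]
  have hdisc := discrim_le_zero key
  rw [discrim] at hdisc
  have hB2 : B ^ 2 ≤ A * Cc := by nlinarith
  calc B ≤ |B| := le_abs_self B
    _ = Real.sqrt (B ^ 2) := (Real.sqrt_sq_eq_abs B).symm
    _ ≤ Real.sqrt (A * Cc) := Real.sqrt_le_sqrt hB2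
    _ = Real.sqrt A * Real.sqrt Cc := Real.sqrt_mul hAnn Cc

section Curve2

variable {C : ℝ → ℝ → Esp n}
  (hC : ContDiff ℝ (⊤ : ℕ∞) fun p : ℝ × ℝ => C p.1 p.2)
  (himm : ∀ u t, Du n C u t ≠ 0)
  (hper : ∀ u t, C (u + 2 * π) t = C u t)

include hC himm hper

set_option maxHeartbeats 2000000 in
lemma poincare (t : ℝ) : ∀ u ∈ Set.Icc (0:ℝ) (2 * π), ‖Ds n C (Dt n C) u t‖ ≤
    ∫ w in (0:ℝ)..(2 * π), ‖Du n (Ds n C (Dt n C)) w t‖ := by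
  have h2π : (0:ℝ) < 2 * π := by positivity
  have hfsm : ContDiff ℝ (⊤ : ℕ∞) fun p : ℝ × ℝ => Ds n C (Dt n C) p.1 p.2 :=
    contDiff_Ds hC himm (contDiff_Dt hC)
  set h : ℝ → Esp n := fun w => Ds n C (Dt n C) w t with hh
  set q : ℝ → Esp n := fun w => Du n (Ds n C (Dt n C)) w t with hq
  set v : ℝ → ℝ := fun w => ‖Du n C w t‖ with hv
  have hc1 : Continuous fun p : ℝ × ℝ => Ds n C (Dt n C) p.1 p.2 := hfsm.continuous
  have hc2 : Continuous fun p : ℝ × ℝ => Du n (Ds n C (Dt n C)) p.1 p.2 :=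
    (contDiff_Du hfsm).continuous
  have hc3 : Continuous fun p : ℝ × ℝ => Du n C p.1 p.2 :=
    (contDiff_Du hC).continuous
  have hcont_h : Continuous h := by rw [hh]; fun_prop
  have hcont_q : Continuous q := by rw [hq]; fun_prop
  have hcont_v : Continuous v := by rw [hv]; fun_prop
  set K := ∫ w in (0:ℝ)..(2 * π), ‖q w‖ with hK
  -- difference bound
  have hdiffb : ∀ a ∈ Set.Icc (0:ℝ) (2 * π), ∀ b ∈ Set.Icc (0:ℝ) (2 * π),
      ‖h b - h a‖ ≤ K := by
    intro a ha b hb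
    have hftc : ∫ w in a..b, q w = h b - h a :=
      intervalIntegral.integral_eq_sub_of_hasDerivAt
        (fun x _ => hasDerivAt_Du hfsm x t) (hcont_q.intervalIntegrable a b)
    rw [← hftc]
    refine le_trans (intervalIntegral.norm_integral_le_abs_integral_norm) ?_
    rcases le_total a b with hab | hab
    · rw [abs_of_nonneg (intervalIntegral.integral_nonneg hab fun _ _ => norm_nonneg _)]
      exact intervalIntegral.integral_mono_interval ha.1 hab hb.2
        (Filter.Eventually.of_forall fun _ => norm_nonneg _)
        (hcont_q.norm.intervalIntegrable _ _)
    · rw [intervalIntegral.integral_symm, abs_neg,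
        abs_of_nonneg (intervalIntegral.integral_nonneg hab fun _ _ => norm_nonneg _)]
      exact intervalIntegral.integral_mono_interval hb.1 hab ha.2
        (Filter.Eventually.of_forall fun _ => norm_nonneg _)
        (hcont_q.norm.intervalIntegrable _ _)
  -- mean zero
  have hmz : ∫ w in (0:ℝ)..(2 * π), v w • h w = 0 := by
    have he : (fun w => v w • h w) = fun w => Du n (Dt n C) w t := by
      funext w
      rw [hv, hh]
      exact (Du_smul_Ds hC himm (Dt n C) w t).symm
    rw [he]
    have hftc : ∫ w in (0:ℝ)..(2 * π), Du n (Dt n C) w t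
        = Dt n C (2 * π) t - Dt n C 0 t :=
      intervalIntegral.integral_eq_sub_of_hasDerivAt
        (fun x _ => hasDerivAt_Du (contDiff_Dt hC) x t)
        ((by have hc4 : Continuous fun p : ℝ × ℝ => Du n (Dt n C) p.1 p.2 :=
                (contDiff_Du (contDiff_Dt hC)).continuous
             fun_prop : Continuous fun w => Du n (Dt n C) w t).intervalIntegrable _ _)
    have hWper : Dt n C (2 * π) t = Dt n C 0 t := by
      have : (fun t' => C (2 * π) t') = fun t' => C 0 t' := by
        funext t'
        have := hper 0 t'
        rwa [zero_add] at this
      rw [Dt, this, Dt]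
    rw [hftc, hWper, sub_self]
  -- length positive
  set L := ∫ w in (0:ℝ)..(2 * π), v w with hL
  have hLpos : 0 < L :=
    intervalIntegral.intervalIntegral_pos_of_pos_on (hcont_v.intervalIntegrable _ _)
      (fun x _ => norm_pos_iff.2 (himm x t)) h2π
  intro u hu
  have key : L • h u = ∫ w in (0:ℝ)..(2 * π), v w • (h u - h w) := by
    have : (fun w => v w • (h u - h w)) = fun w => v w • h u - v w • h w := by
      funext w; rw [smul_sub]
    rw [this, intervalIntegral.integral_sub, hmz, sub_zero,
      intervalIntegral.integral_smul_const]
    · exact ((hcont_v.smul continuous_const).intervalIntegrable _ _)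
    · exact ((hcont_v.smul hcont_h).intervalIntegrable _ _)
  have hnorm : L * ‖h u‖ ≤ L * K := by
    have h1 : ‖L • h u‖ = L * ‖h u‖ := by
      rw [norm_smul, Real.norm_eq_abs, abs_of_pos hLpos]
    calc L * ‖h u‖ = ‖L • h u‖ := h1.symm
      _ ≤ ∫ w in (0:ℝ)..(2 * π), ‖v w • (h u - h w)‖ := by
          rw [key]
          exact intervalIntegral.norm_integral_le_integral_norm h2π.le
      _ ≤ ∫ w in (0:ℝ)..(2 * π), v w * K := by
          refine intervalIntegral.integral_mono_on h2π.le
            ((hcont_v.smul (continuous_const.sub hcont_h)).norm.intervalIntegrable _ _)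
            ((hcont_v.mul continuous_const).intervalIntegrable _ _) ?_
          intro w hw
          rw [norm_smul, Real.norm_eq_abs, abs_of_nonneg (norm_nonneg _)]
          exact mul_le_mul_of_nonneg_left (hdiffb w hw u hu) (norm_nonneg _)
      _ = L * K := by rw [intervalIntegral.integral_mul_const]
  exact le_of_mul_le_mul_left hnorm hLpos

end Curve2

set_option maxHeartbeats 1000000 in
/-- Bound on the time derivative of the elastic energy along a smooth family of
immersed closed curves: `|E'(t)| ≤ 2√(E(t)) N(t) + 3 E(t) √(L(t)) N(t)`. -/
theorem elastic_energy_derivative_bound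
    (n : ℕ) (C : ℝ → ℝ → EuclideanSpace ℝ (Fin n))
    (hC : ContDiff ℝ (⊤ : ℕ∞) fun p : ℝ × ℝ => C p.1 p.2)
    (hper : ∀ u t, C (u + 2 * π) t = C u t)
    (himm : ∀ u t, Du n C u t ≠ 0) (t : ℝ) :
    DifferentiableAt ℝ (elasticE n C) t ∧
      |deriv (elasticE n C) t| ≤
        2 * Real.sqrt (elasticE n C t) * NN n C t +
          3 * elasticE n C t * Real.sqrt (clen n C t) * NN n C t := by
  have h2π : (0:ℝ) ≤ 2 * π := by positivity
  -- continuity facts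
  have hTsm : ContDiff ℝ (⊤ : ℕ∞) fun p : ℝ × ℝ => Ds n C C p.1 p.2 := contDiff_Ds hC himm hC
  have hfsm : ContDiff ℝ (⊤ : ℕ∞) fun p : ℝ × ℝ => Ds n C (Dt n C) p.1 p.2 :=
    contDiff_Ds hC himm (contDiff_Dt hC)
  have hκsm : ContDiff ℝ (⊤ : ℕ∞) fun p : ℝ × ℝ => Ds n C (Ds n C C) p.1 p.2 :=
    contDiff_Ds hC himm hTsm
  have hgsm : ContDiff ℝ (⊤ : ℕ∞) fun p : ℝ × ℝ => Ds n C (Ds n C (Dt n C)) p.1 p.2 :=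
    contDiff_Ds hC himm hfsm
  have hTc : Continuous fun p : ℝ × ℝ => Ds n C C p.1 p.2 := hTsm.continuous
  have hfc : Continuous fun p : ℝ × ℝ => Ds n C (Dt n C) p.1 p.2 := hfsm.continuous
  have hκc : Continuous fun p : ℝ × ℝ => Ds n C (Ds n C C) p.1 p.2 := hκsm.continuous
  have hgc : Continuous fun p : ℝ × ℝ => Ds n C (Ds n C (Dt n C)) p.1 p.2 := hgsm.continuous
  have hVc : Continuous fun p : ℝ × ℝ => Du n C p.1 p.2 := (contDiff_Du hC).continuous
  -- the t-derivative of the integrand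
  set P : ℝ → ℝ → ℝ := fun u x =>
    2 * ⟪Ds n C (Ds n C C) u x, Ds n C (Ds n C (Dt n C)) u x⟫ * ‖Du n C u x‖ -
      3 * ⟪Ds n C (Dt n C) u x, Ds n C C u x⟫ *
        (‖Ds n C (Ds n C C) u x‖ ^ 2 * ‖Du n C u x‖) with hPdef
  have hPc : Continuous fun p : ℝ × ℝ => P p.1 p.2 := by
    apply Continuous.sub
    · exact (continuous_const.mul ((hκc.inner hgc))).mul hVc.norm
    · exact (continuous_const.mul (hfc.inner hTc)).mul ((hκc.norm.pow 2).mul hVc.norm)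
  -- uniform local bound for P
  obtain ⟨M, hM⟩ := (isCompact_Icc.prod (isCompact_Icc (a := t - 1) (b := t + 1))).exists_bound_of_continuousOn
    (f := fun p : ℝ × ℝ => P p.1 p.2) hPc.continuousOn
  -- differentiation under the integral sign
  have main := intervalIntegral.hasDerivAt_integral_of_dominated_loc_of_deriv_le
    (μ := MeasureTheory.volume) (a := 0) (b := 2 * π) (s := Metric.ball t 1)
    (F := fun x u => ‖Ds n C (Ds n C C) u x‖ ^ 2 * ‖Du n C u x‖)
    (F' := fun x u => P u x) (x₀ := t) (bound := fun _ => M) (Metric.ball_mem_nhds t one_pos)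
    (Filter.Eventually.of_forall fun x => by
      have : Continuous fun u => ‖Ds n C (Ds n C C) u x‖ ^ 2 * ‖Du n C u x‖ := by fun_prop
      exact this.aestronglyMeasurable.restrict)
    (by
      have : Continuous fun u => ‖Ds n C (Ds n C C) u t‖ ^ 2 * ‖Du n C u t‖ := by fun_prop
      exact this.intervalIntegrable _ _)
    (by
      have : Continuous fun u => P u t := by fun_prop
      exact this.aestronglyMeasurable.restrict)
    (Filter.Eventually.of_forall fun u hu => by
      intro x hx
      have hu' : u ∈ Set.Icc (0:ℝ) (2 * π) := by
        rw [Set.uIoc_of_le h2π] at hu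
        exact ⟨hu.1.le, hu.2⟩
      have hx' : x ∈ Set.Icc (t - 1) (t + 1) := by
        rw [Metric.mem_ball, Real.dist_eq, abs_sub_lt_iff] at hx
        constructor <;> linarith [hx.1, hx.2]
      exact hM (u, x) (Set.mk_mem_prod hu' hx'))
    (intervalIntegrable_const)
    (Filter.Eventually.of_forall fun u hu => fun x hx => hasDerivAt_integrand hC himm u x)
  obtain ⟨hPint, hE⟩ := main
  have hE' : HasDerivAt (elasticE n C) (∫ u in (0:ℝ)..(2 * π), P u t) t := hE
  refine ⟨hE'.differentiableAt, ?_⟩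
  rw [hE'.deriv]
  -- notation for the fixed-time slices
  have hvc : Continuous fun u => ‖Du n C u t‖ := by fun_prop
  have hvnn : ∀ u, (0:ℝ) ≤ ‖Du n C u t‖ := fun u => norm_nonneg _
  have hsc : Continuous fun u => Real.sqrt ‖Du n C u t‖ := Real.continuous_sqrt.comp hvc
  have hκtc : Continuous fun u => Ds n C (Ds n C C) u t := by fun_prop
  have hgtc : Continuous fun u => Ds n C (Ds n C (Dt n C)) u t := by fun_prop
  have hftc : Continuous fun u => Ds n C (Dt n C) u t := by fun_prop
  have hTtc : Continuous fun u => Ds n C C u t := by fun_prop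
  -- split the integral
  have hsplit : (∫ u in (0:ℝ)..(2 * π), P u t) =
      2 * (∫ u in (0:ℝ)..(2 * π),
            ⟪Ds n C (Ds n C C) u t, Ds n C (Ds n C (Dt n C)) u t⟫ * ‖Du n C u t‖) -
      3 * (∫ u in (0:ℝ)..(2 * π),
            ⟪Ds n C (Dt n C) u t, Ds n C C u t⟫ *
              (‖Ds n C (Ds n C C) u t‖ ^ 2 * ‖Du n C u t‖)) := by
    rw [← intervalIntegral.integral_const_mul, ← intervalIntegral.integral_const_mul,
      ← intervalIntegral.integral_sub]
    · apply intervalIntegral.integral_congr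
      intro u _
      rw [hPdef]
      ring
    · exact (continuous_const.mul ((hκtc.inner hgtc).mul hvc)).intervalIntegrable _ _
    · exact (continuous_const.mul ((hftc.inner hTtc).mul
        ((hκtc.norm.pow 2).mul hvc))).intervalIntegrable _ _
  -- first term : Cauchy-Schwarz
  have hbound1 : |∫ u in (0:ℝ)..(2 * π),
      ⟪Ds n C (Ds n C C) u t, Ds n C (Ds n C (Dt n C)) u t⟫ * ‖Du n C u t‖| ≤
      Real.sqrt (elasticE n C t) * NN n C t := by
    have step1 := intervalIntegral.abs_integral_le_integral_abs (f := fun u =>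
      ⟪Ds n C (Ds n C C) u t, Ds n C (Ds n C (Dt n C)) u t⟫ * ‖Du n C u t‖)
      (μ := MeasureTheory.volume) h2π
    have step2 : (∫ u in (0:ℝ)..(2 * π),
        |⟪Ds n C (Ds n C C) u t, Ds n C (Ds n C (Dt n C)) u t⟫ * ‖Du n C u t‖|) ≤
        ∫ u in (0:ℝ)..(2 * π),
          (‖Ds n C (Ds n C C) u t‖ * Real.sqrt ‖Du n C u t‖) *
            (‖Ds n C (Ds n C (Dt n C)) u t‖ * Real.sqrt ‖Du n C u t‖) := by
      refine intervalIntegral.integral_mono_on h2π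
        (((hκtc.inner hgtc).mul hvc).abs.intervalIntegrable _ _)
        (((hκtc.norm.mul hsc).mul (hgtc.norm.mul hsc)).intervalIntegrable _ _) ?_
      intro u _
      have h1 : |⟪Ds n C (Ds n C C) u t, Ds n C (Ds n C (Dt n C)) u t⟫| ≤
          ‖Ds n C (Ds n C C) u t‖ * ‖Ds n C (Ds n C (Dt n C)) u t‖ :=
        abs_real_inner_le_norm _ _
      have h2 : Real.sqrt ‖Du n C u t‖ * Real.sqrt ‖Du n C u t‖ = ‖Du n C u t‖ :=
        Real.mul_self_sqrt (hvnn u)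
      rw [abs_mul, abs_of_nonneg (hvnn u)]
      calc |⟪Ds n C (Ds n C C) u t, Ds n C (Ds n C (Dt n C)) u t⟫| * ‖Du n C u t‖
          ≤ (‖Ds n C (Ds n C C) u t‖ * ‖Ds n C (Ds n C (Dt n C)) u t‖) * ‖Du n C u t‖ :=
            mul_le_mul_of_nonneg_right h1 (hvnn u)
        _ = (‖Ds n C (Ds n C C) u t‖ * Real.sqrt ‖Du n C u t‖) *
            (‖Ds n C (Ds n C (Dt n C)) u t‖ * Real.sqrt ‖Du n C u t‖) := by
            rw [mul_mul_mul_comm, h2]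
    have step3 := integral_cs (f := fun u => ‖Ds n C (Ds n C C) u t‖ * Real.sqrt ‖Du n C u t‖)
      (g := fun u => ‖Ds n C (Ds n C (Dt n C)) u t‖ * Real.sqrt ‖Du n C u t‖)
      (hκtc.norm.mul hsc) (hgtc.norm.mul hsc)
    have e1 : (∫ u in (0:ℝ)..(2 * π),
        (‖Ds n C (Ds n C C) u t‖ * Real.sqrt ‖Du n C u t‖) ^ 2) = elasticE n C t := by
      rw [elasticE]
      apply intervalIntegral.integral_congr
      intro u _
      simp only [mul_pow]
      rw [Real.sq_sqrt (hvnn u)]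
    have e2 : (∫ u in (0:ℝ)..(2 * π),
        (‖Ds n C (Ds n C (Dt n C)) u t‖ * Real.sqrt ‖Du n C u t‖) ^ 2) =
        ∫ u in (0:ℝ)..(2 * π), ‖Ds n C (Ds n C (Dt n C)) u t‖ ^ 2 * ‖Du n C u t‖ := by
      apply intervalIntegral.integral_congr
      intro u _
      simp only [mul_pow]
      rw [Real.sq_sqrt (hvnn u)]
    rw [e1, e2] at step3
    have hNN : NN n C t = Real.sqrt (∫ u in (0:ℝ)..(2 * π),
        ‖Ds n C (Ds n C (Dt n C)) u t‖ ^ 2 * ‖Du n C u t‖) := rfl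
    rw [hNN]
    calc |∫ u in (0:ℝ)..(2 * π),
        ⟪Ds n C (Ds n C C) u t, Ds n C (Ds n C (Dt n C)) u t⟫ * ‖Du n C u t‖|
        ≤ _ := step1
      _ ≤ _ := step2
      _ ≤ Real.sqrt (elasticE n C t) * NN n C t := step3
  -- Poincare sup bound
  have hK := poincare hC himm hper t
  have hKN : (∫ w in (0:ℝ)..(2 * π), ‖Du n (Ds n C (Dt n C)) w t‖) ≤
      Real.sqrt (clen n C t) * NN n C t := by
    have e0 : ∀ w, Real.sqrt ‖Du n C w t‖ *
        (‖Ds n C (Ds n C (Dt n C)) w t‖ * Real.sqrt ‖Du n C w t‖) =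
        ‖Du n (Ds n C (Dt n C)) w t‖ := by
      intro w
      calc Real.sqrt ‖Du n C w t‖ *
          (‖Ds n C (Ds n C (Dt n C)) w t‖ * Real.sqrt ‖Du n C w t‖)
          = (Real.sqrt ‖Du n C w t‖ * Real.sqrt ‖Du n C w t‖) *
            ‖Ds n C (Ds n C (Dt n C)) w t‖ := by ring
        _ = ‖Du n C w t‖ * ‖Ds n C (Ds n C (Dt n C)) w t‖ := by
            rw [Real.mul_self_sqrt (hvnn w)]
        _ = ‖‖Du n C w t‖ • Ds n C (Ds n C (Dt n C)) w t‖ := by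
            rw [norm_smul, norm_norm]
        _ = ‖Du n (Ds n C (Dt n C)) w t‖ := by
            rw [← Du_smul_Ds hC himm (Ds n C (Dt n C)) w t]
    have ecg : (∫ w in (0:ℝ)..(2 * π), ‖Du n (Ds n C (Dt n C)) w t‖) =
        ∫ w in (0:ℝ)..(2 * π), Real.sqrt ‖Du n C w t‖ *
          (‖Ds n C (Ds n C (Dt n C)) w t‖ * Real.sqrt ‖Du n C w t‖) := by
      apply intervalIntegral.integral_congr
      intro w _
      exact (e0 w).symm
    rw [ecg]
    have step := integral_cs (f := fun w => Real.sqrt ‖Du n C w t‖)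
      (g := fun w => ‖Ds n C (Ds n C (Dt n C)) w t‖ * Real.sqrt ‖Du n C w t‖)
      hsc (hgtc.norm.mul hsc)
    have e1 : (∫ w in (0:ℝ)..(2 * π), Real.sqrt ‖Du n C w t‖ ^ 2) = clen n C t := by
      rw [clen]
      apply intervalIntegral.integral_congr
      intro w _
      simp only []
      rw [Real.sq_sqrt (hvnn w)]
    have e2 : (∫ w in (0:ℝ)..(2 * π),
        (‖Ds n C (Ds n C (Dt n C)) w t‖ * Real.sqrt ‖Du n C w t‖) ^ 2) =
        ∫ w in (0:ℝ)..(2 * π), ‖Ds n C (Ds n C (Dt n C)) w t‖ ^ 2 * ‖Du n C w t‖ := by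
      apply intervalIntegral.integral_congr
      intro w _
      simp only [mul_pow]
      rw [Real.sq_sqrt (hvnn w)]
    rw [e1, e2] at step
    have hNN : NN n C t = Real.sqrt (∫ u in (0:ℝ)..(2 * π),
        ‖Ds n C (Ds n C (Dt n C)) u t‖ ^ 2 * ‖Du n C u t‖) := rfl
    rw [hNN]
    exact step
  have hphi : ∀ u ∈ Set.Icc (0:ℝ) (2 * π),
      |⟪Ds n C (Dt n C) u t, Ds n C C u t⟫| ≤ Real.sqrt (clen n C t) * NN n C t := by
    intro u hu
    calc |⟪Ds n C (Dt n C) u t, Ds n C C u t⟫|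
        ≤ ‖Ds n C (Dt n C) u t‖ * ‖Ds n C C u t‖ := abs_real_inner_le_norm _ _
      _ = ‖Ds n C (Dt n C) u t‖ := by rw [norm_T_one hC himm u t, mul_one]
      _ ≤ ∫ w in (0:ℝ)..(2 * π), ‖Du n (Ds n C (Dt n C)) w t‖ := hK u hu
      _ ≤ Real.sqrt (clen n C t) * NN n C t := hKN
  -- second term bound
  have hbound2 : |∫ u in (0:ℝ)..(2 * π),
      ⟪Ds n C (Dt n C) u t, Ds n C C u t⟫ *
        (‖Ds n C (Ds n C C) u t‖ ^ 2 * ‖Du n C u t‖)| ≤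
      (Real.sqrt (clen n C t) * NN n C t) * elasticE n C t := by
    have step1 := intervalIntegral.abs_integral_le_integral_abs (f := fun u =>
      ⟪Ds n C (Dt n C) u t, Ds n C C u t⟫ * (‖Ds n C (Ds n C C) u t‖ ^ 2 * ‖Du n C u t‖))
      (μ := MeasureTheory.volume) h2π
    have step2 : (∫ u in (0:ℝ)..(2 * π), |⟪Ds n C (Dt n C) u t, Ds n C C u t⟫ *
        (‖Ds n C (Ds n C C) u t‖ ^ 2 * ‖Du n C u t‖)|) ≤
        ∫ u in (0:ℝ)..(2 * π), (Real.sqrt (clen n C t) * NN n C t) *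
          (‖Ds n C (Ds n C C) u t‖ ^ 2 * ‖Du n C u t‖) := by
      refine intervalIntegral.integral_mono_on h2π
        (((hftc.inner hTtc).mul ((hκtc.norm.pow 2).mul hvc)).abs.intervalIntegrable _ _)
        ((continuous_const.mul ((hκtc.norm.pow 2).mul hvc)).intervalIntegrable _ _) ?_
      intro u hu
      rw [abs_mul, abs_of_nonneg (by positivity : (0:ℝ) ≤ ‖Ds n C (Ds n C C) u t‖ ^ 2 * ‖Du n C u t‖)]
      exact mul_le_mul_of_nonneg_right (hphi u hu) (by positivity)
    have step3 : (∫ u in (0:ℝ)..(2 * π), (Real.sqrt (clen n C t) * NN n C t) *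
        (‖Ds n C (Ds n C C) u t‖ ^ 2 * ‖Du n C u t‖)) =
        (Real.sqrt (clen n C t) * NN n C t) * elasticE n C t := by
      rw [intervalIntegral.integral_const_mul, elasticE]
    calc |∫ u in (0:ℝ)..(2 * π), ⟪Ds n C (Dt n C) u t, Ds n C C u t⟫ *
        (‖Ds n C (Ds n C C) u t‖ ^ 2 * ‖Du n C u t‖)|
        ≤ _ := step1
      _ ≤ _ := step2
      _ = _ := step3
  -- assemble
  rw [hsplit]
  have habs : |2 * (∫ u in (0:ℝ)..(2 * π),
      ⟪Ds n C (Ds n C C) u t, Ds n C (Ds n C (Dt n C)) u t⟫ * ‖Du n C u t‖) -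
      3 * (∫ u in (0:ℝ)..(2 * π), ⟪Ds n C (Dt n C) u t, Ds n C C u t⟫ *
        (‖Ds n C (Ds n C C) u t‖ ^ 2 * ‖Du n C u t‖))| ≤
      2 * |∫ u in (0:ℝ)..(2 * π),
        ⟪Ds n C (Ds n C C) u t, Ds n C (Ds n C (Dt n C)) u t⟫ * ‖Du n C u t‖| +
      3 * |∫ u in (0:ℝ)..(2 * π), ⟪Ds n C (Dt n C) u t, Ds n C C u t⟫ *
        (‖Ds n C (Ds n C C) u t‖ ^ 2 * ‖Du n C u t‖)| := by
    refine le_trans (abs_sub _ _) ?_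
    rw [abs_mul, abs_mul]
    norm_num
  refine le_trans habs ?_
  have h1 := hbound1
  have h2 := hbound2
  nlinarith [h1, h2, abs_nonneg (∫ u in (0:ℝ)..(2 * π),
    ⟪Ds n C (Ds n C C) u t, Ds n C (Ds n C (Dt n C)) u t⟫ * ‖Du n C u t‖)]
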